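/- Let G be a Shapley network design game with k ≥ 2 players, let N be a Nash equilibrium with Φ(N) ≤ Φ(O), where O is a social optimum, and suppose that no edge of O is used by all k players (i.e., O^k = ∅). Then cost(N) ≤ H_{k−1} · cost(O). -/

import Mathlib

/-- The `n`-th harmonic number `H_n = ∑_{i=1}^n 1/i`, as a real number. -/
noncomputable def harmonicR (n : ℕ) : ℝ := ∑ i ∈ Finset.range n, (1 : ℝ) / (i + 1)

/-- A Shapley network design game with `k` players on a finite undirected graph:
an undirected simple graph `G` on the vertex type `V`, positive edge costs `c`,
and terminal pairs `s i`, `t i` for each player `i`. -/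
structure ShapleyGame (V : Type) [Fintype V] [DecidableEq V] (k : ℕ) where
  G : SimpleGraph V
  c : Sym2 V → ℝ
  c_pos : ∀ e ∈ G.edgeSet, 0 < c e
  s : Fin k → V
  t : Fin k → V

namespace ShapleyGame

variable {V : Type} [Fintype V] [DecidableEq V] {k : ℕ}

/-- A strategy profile: a simple `s i`–`t i` path for each player `i`. -/
abbrev Profile (g : ShapleyGame V k) : Type :=
  ∀ i : Fin k, g.G.Path (g.s i) (g.t i)

/-- `k_e`: the number of players whose path uses edge `e` in profile `P`. -/
def ke (g : ShapleyGame V k) (P : g.Profile) (e : Sym2 V) : ℕ :=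
  (Finset.univ.filter fun i : Fin k => e ∈ (P i).1.edges).card

/-- The set `E(P)` of edges used by at least one player in profile `P`. -/
def profileEdges (g : ShapleyGame V k) (P : g.Profile) : Finset (Sym2 V) :=
  Finset.univ.filter fun e : Sym2 V => ∃ i : Fin k, e ∈ (P i).1.edges

/-- The individual cost of player `i`: each edge cost is shared equally
among the players using the edge. -/
noncomputable def playerCost (g : ShapleyGame V k) (P : g.Profile) (i : Fin k) : ℝ :=
  ∑ e ∈ (P i).1.edges.toFinset, g.c e / (g.ke P e)

/-- The social cost of a profile: total cost of all used edges. -/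
noncomputable def socialCost (g : ShapleyGame V k) (P : g.Profile) : ℝ :=
  ∑ e ∈ g.profileEdges P, g.c e

/-- Rosenthal's potential `Φ(P) = ∑_{e ∈ E(P)} H_{k_e} · c_e`. -/
noncomputable def potential (g : ShapleyGame V k) (P : g.Profile) : ℝ :=
  ∑ e ∈ g.profileEdges P, harmonicR (g.ke P e) * g.c e

/-- `P` is a Nash equilibrium: no player can decrease her individual cost
by unilaterally switching to another simple path. -/
def IsNash (g : ShapleyGame V k) (P : g.Profile) : Prop :=
  ∀ (i : Fin k) (Q : g.G.Path (g.s i) (g.t i)),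
    g.playerCost P i ≤ g.playerCost (Function.update P i Q) i

/-- `P` is a social optimum: it minimizes the social cost over all profiles. -/
def IsSocialOpt (g : ShapleyGame V k) (P : g.Profile) : Prop :=
  ∀ Q : g.Profile, g.socialCost P ≤ g.socialCost Q

/-- `P` is a potential minimizer: it minimizes Rosenthal's potential over all profiles. -/
def IsPotMin (g : ShapleyGame V k) (P : g.Profile) : Prop :=
  ∀ Q : g.Profile, g.potential P ≤ g.potential Q

/-- `P^j`: the set of edges used by exactly `j` players in profile `P`. -/
def exactly (g : ShapleyGame V k) (P : g.Profile) (j : ℕ) : Finset (Sym2 V) :=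
  (g.profileEdges P).filter fun e => g.ke P e = j

/-- `|M|`: the total cost of a set of edges. -/
noncomputable def csum (g : ShapleyGame V k) (M : Finset (Sym2 V)) : ℝ := ∑ e ∈ M, g.c e

end ShapleyGame

/-- if `N` is a Nash equilibrium with `Φ(N) ≤ Φ(O)` for a social
optimum `O` in which no edge is used by all `k ≥ 2` players, then
`cost(N) ≤ H_{k−1} · cost(O)`. -/
theorem no_full_edge_bound {V : Type} [Fintype V] [DecidableEq V] {k : ℕ} (hk : 2 ≤ k)
    (g : ShapleyGame V k) (N O : g.Profile)
    (hN : g.IsNash N) (hO : g.IsSocialOpt O)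
    (hpot : g.potential N ≤ g.potential O)
    (hOk : g.exactly O k = ∅) :
    g.socialCost N ≤ harmonicR (k - 1) * g.socialCost O := by
  have hmono : Monotone harmonicR := fun n m h =>
    Finset.sum_le_sum_of_subset_of_nonneg (Finset.range_mono h)
      (by intros; positivity)
  have hpos : ∀ (P : g.Profile) (e : Sym2 V), e ∈ g.profileEdges P → 0 < g.c e := by
    intro P e he
    rw [ShapleyGame.profileEdges, Finset.mem_filter] at he
    obtain ⟨-, i, hi⟩ := he
    exact g.c_pos e ((P i).1.edges_subset_edgeSet hi)
  have h1 : g.socialCost N ≤ g.potential N := by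
    apply Finset.sum_le_sum
    intro e he
    have hc := hpos N e he
    have hke : 1 ≤ g.ke N e := by
      rw [ShapleyGame.profileEdges, Finset.mem_filter] at he
      obtain ⟨-, i, hi⟩ := he
      exact Finset.card_pos.2 ⟨i, Finset.mem_filter.2 ⟨Finset.mem_univ i, hi⟩⟩
    have h1H : 1 ≤ harmonicR (g.ke N e) := by
      calc (1 : ℝ) = harmonicR 1 := by simp [harmonicR]
      _ ≤ _ := hmono hke
    nlinarith
  have h2 : g.potential O ≤ harmonicR (k - 1) * g.socialCost O := by
    rw [ShapleyGame.socialCost, Finset.mul_sum]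
    apply Finset.sum_le_sum
    intro e he
    have hc := hpos O e he
    have hkle : g.ke O e ≤ k - 1 := by
      have hle : g.ke O e ≤ k := by
        simpa [ShapleyGame.ke] using Finset.card_filter_le Finset.univ
          (fun i : Fin k => e ∈ ((O i).1).edges)
      have hne : g.ke O e ≠ k := by
        intro hk'
        have : e ∈ g.exactly O k := Finset.mem_filter.2 ⟨he, hk'⟩
        simp [hOk] at this
      omega
    exact mul_le_mul_of_nonneg_right (hmono hkle) hc.le
  linarith
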